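/- arXiv:2207.11107 — 4 statements merged into one kernel-verified Lean document; each statement's English description precedes it below -/
import Mathlib

section
/- Let H be a real Hilbert space, let A: H → 2^H be maximally monotone, let α > 0, and let U be a bounded self-adjoint operator with U ⪰ α·Id. Let G be the Hilbert space obtained from H with the inner product ⟨x,y⟩_{U⁻¹} = ⟨x, U⁻¹y⟩. Then the operator UA (i.e., x ↦ U(Ax)) is maximally monotone on G. -/
open scoped RealInnerProductSpace

/-- Lemma 3.7(i): if A is maximally monotone and U ⪰ α·Id is self-adjoint
bounded with inverse U⁻¹, then UA is maximally monotone with respect to the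
inner product ⟨x,y⟩_{U⁻¹} = ⟨x, U⁻¹y⟩. -/
theorem stmt9
    {H : Type*} [NormedAddCommGroup H] [InnerProductSpace ℝ H] [CompleteSpace H]
    (α : ℝ) (hα : 0 < α)
    (U U' : H →L[ℝ] H) (hU : IsSelfAdjoint U)
    (hU' : ∀ x, U (U' x) = x ∧ U' (U x) = x)
    (hUα : ∀ x : H, α * ‖x‖ ^ 2 ≤ ⟪U x, x⟫)
    (A : H → Set H)
    (hAmono : ∀ x y u v, u ∈ A x → v ∈ A y → 0 ≤ ⟪x - y, u - v⟫)
    (hAmax : ∀ x u, (∀ y v, v ∈ A y → 0 ≤ ⟪x - y, u - v⟫) → u ∈ A x) :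
    (∀ x y u v, u ∈ (U '' A x) → v ∈ (U '' A y) →
        0 ≤ ⟪x - y, U' (u - v)⟫) ∧
    (∀ x u, (∀ y v, v ∈ (U '' A y) → 0 ≤ ⟪x - y, U' (u - v)⟫) →
        u ∈ (U '' A x)) := by
  constructor
  · rintro x y u v ⟨a, ha, rfl⟩ ⟨b, hb, rfl⟩
    have : U' (U a - U b) = a - b := by
      rw [map_sub, (hU' a).2, (hU' b).2]
    rw [this]
    exact hAmono x y a b ha hb
  · intro x u h
    refine ⟨U' u, hAmax x (U' u) ?_, (hU' u).1⟩
    intro y v hv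
    have := h y (U v) ⟨v, hv, rfl⟩
    rwa [map_sub, (hU' v).2] at this
end

section
/- Let H be a real Hilbert space, α > 0, (ηₙ) a summable sequence in [0,∞), and (Wₙ) a sequence of self-adjoint operators with Wₙ ⪰ α·Id and sup_n ‖Wₙ‖ < ∞, such that (1+ηₙ)Wₙ₊₁ ⪰ Wₙ for all n. Then there exists a self-adjoint operator W with W ⪰ α·Id such that Wₙx → Wx for every x ∈ H. -/
open scoped RealInnerProductSpace
open Filter

lemma aux_cs {H : Type*} [NormedAddCommGroup H] [InnerProductSpace ℝ H]
    (A : H →L[ℝ] H) (hsym : ∀ u v : H, ⟪A u, v⟫ = ⟪u, A v⟫)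
    (hpos : ∀ u : H, 0 ≤ ⟪A u, u⟫) (x y : H) :
    ⟪A x, y⟫ ^ 2 ≤ ⟪A x, x⟫ * ⟪A y, y⟫ := by
  have h : ∀ t : ℝ, 0 ≤ ⟪A y, y⟫ * (t * t) + (2 * ⟪A x, y⟫) * t + ⟪A x, x⟫ := by
    intro t
    have h0 := hpos (x + t • y)
    have hyx : ⟪A y, x⟫ = ⟪A x, y⟫ := by
      rw [hsym y x, real_inner_comm]
    simp only [map_add, map_smul, inner_add_left, inner_add_right, inner_smul_left,
      inner_smul_right, RCLike.conj_to_real] at h0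
    rw [hyx] at h0
    nlinarith [h0]
  have hd := discrim_le_zero h
  rw [discrim] at hd
  nlinarith [hd]

lemma aux_norm_sq {H : Type*} [NormedAddCommGroup H] [InnerProductSpace ℝ H]
    (A : H →L[ℝ] H) (hsym : ∀ u v : H, ⟪A u, v⟫ = ⟪u, A v⟫)
    (hpos : ∀ u : H, 0 ≤ ⟪A u, u⟫) (x : H) :
    ‖A x‖ ^ 2 ≤ ‖A‖ * ⟪A x, x⟫ := by
  by_cases h : A x = 0
  · simp [h]
  · have h1 := aux_cs A hsym hpos x (A x)
    have h2 : ⟪A x, A x⟫ = ‖A x‖ ^ 2 := real_inner_self_eq_norm_sq (A x)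
    have h3 : ⟪A (A x), A x⟫ ≤ ‖A‖ * ‖A x‖ ^ 2 := by
      calc ⟪A (A x), A x⟫ ≤ ‖A (A x)‖ * ‖A x‖ := real_inner_le_norm _ _
        _ ≤ (‖A‖ * ‖A x‖) * ‖A x‖ := by
            gcongr; exact A.le_opNorm _
        _ = ‖A‖ * ‖A x‖ ^ 2 := by ring
    have h4 : 0 < ‖A x‖ := norm_pos_iff.mpr h
    have h5 : 0 ≤ ⟪A x, x⟫ := hpos x
    have h6 : ‖A x‖ ^ 2 * ‖A x‖ ^ 2 ≤ (‖A‖ * ⟪A x, x⟫) * ‖A x‖ ^ 2 := by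
      nlinarith [mul_le_mul_of_nonneg_left h3 h5]
    have h7 : (0:ℝ) < ‖A x‖ ^ 2 := by positivity
    exact le_of_mul_le_mul_right h6 h7

set_option maxHeartbeats 1000000 in
/-- Lemma 2.2 of Combettes–Vũ: a variable-metric sequence (Wₙ) with
(1+ηₙ)Wₙ₊₁ ⪰ Wₙ, Wₙ ⪰ α·Id and sup‖Wₙ‖ < ∞ converges pointwise to some
W ⪰ α·Id. -/
theorem stmt13
    {H : Type*} [NormedAddCommGroup H] [InnerProductSpace ℝ H] [CompleteSpace H]
    (α : ℝ) (hα : 0 < α)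
    (η : ℕ → ℝ) (hη : ∀ n, 0 ≤ η n) (hηs : Summable η)
    (W : ℕ → (H →L[ℝ] H)) (hW : ∀ n, IsSelfAdjoint (W n))
    (hWα : ∀ n, ∀ x : H, α * ‖x‖ ^ 2 ≤ ⟪W n x, x⟫)
    (hWb : ∃ μ : ℝ, ∀ n, ‖W n‖ ≤ μ)
    (hmono : ∀ n, ∀ x : H, ⟪W n x, x⟫ ≤ (1 + η n) * ⟪W (n + 1) x, x⟫) :
    ∃ Wlim : H →L[ℝ] H, IsSelfAdjoint Wlim ∧
      (∀ x : H, α * ‖x‖ ^ 2 ≤ ⟪Wlim x, x⟫) ∧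
      (∀ x : H, Tendsto (fun n => W n x) atTop (nhds (Wlim x))) := by
  obtain ⟨μ, hμ⟩ := hWb
  have hμ0 : 0 ≤ μ := le_trans (norm_nonneg _) (hμ 0)
  have hsymW : ∀ n, ∀ u v : H, ⟪W n u, v⟫ = ⟪u, W n v⟫ := fun n =>
    (ContinuousLinearMap.isSelfAdjoint_iff_isSymmetric.mp (hW n))
  -- the products
  set P : ℕ → ℝ := fun n => ∏ k ∈ Finset.range n, (1 + η k) with hPdef
  have hP1 : ∀ n, 1 ≤ P n := by
    intro n
    induction n with
    | zero => simp [hPdef]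
    | succ n ih =>
      have : P (n+1) = P n * (1 + η n) := Finset.prod_range_succ _ n
      rw [this]
      nlinarith [hη n]
  have hP0 : ∀ n, 0 < P n := fun n => lt_of_lt_of_le one_pos (hP1 n)
  have hPsucc : ∀ n, P (n + 1) = P n * (1 + η n) := by
    intro n; rw [hPdef]; exact Finset.prod_range_succ _ n
  have hPmono : Monotone P := by
    refine monotone_nat_of_le_succ fun n => ?_
    rw [hPsucc n]
    nlinarith [hP0 n, hη n]
  set C : ℝ := Real.exp (∑' k, η k) with hCdef
  have hC1 : 1 ≤ C := Real.one_le_exp (tsum_nonneg hη)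
  have hPC : ∀ n, P n ≤ C := by
    intro n
    calc P n ≤ ∏ k ∈ Finset.range n, Real.exp (η k) := by
          refine Finset.prod_le_prod (fun k _ => by linarith [hη k]) fun k _ => ?_
          linarith [Real.add_one_le_exp (η k)]
      _ = Real.exp (∑ k ∈ Finset.range n, η k) := (Real.exp_sum _ _).symm
      _ ≤ C := Real.exp_le_exp.mpr (Summable.sum_le_tsum _ (fun k _ => hη k) hηs)
  clear_value C
  clear hCdef
  obtain ⟨Pl, hPl⟩ : ∃ l, Tendsto P atTop (nhds l) :=
    ⟨_, tendsto_atTop_ciSup hPmono ⟨C, fun _ ⟨n, hn⟩ => hn ▸ hPC n⟩⟩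
  have hg : ∀ x : H, Monotone (fun n => P n * ⟪W n x, x⟫) := by
    intro x
    refine monotone_nat_of_le_succ fun n => ?_
    have h := hmono n x
    have h2 : P (n+1) = P n * (1 + η n) := hPsucc n
    rw [h2]
    calc P n * ⟪W n x, x⟫ ≤ P n * ((1 + η n) * ⟪W (n+1) x, x⟫) :=
          mul_le_mul_of_nonneg_left h (le_of_lt (hP0 n))
      _ = P n * (1 + η n) * ⟪W (n+1) x, x⟫ := by ring
  clear_value P
  clear hPdef hPsucc
  have hPcauchy : CauchySeq P := hPl.cauchySeq
  -- quadratic forms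
  have hQnn : ∀ n (x : H), 0 ≤ ⟪W n x, x⟫ := fun n x =>
    le_trans (by positivity) (hWα n x)
  have hQb : ∀ n (x : H), ⟪W n x, x⟫ ≤ μ * ‖x‖ ^ 2 := by
    intro n x
    calc ⟪W n x, x⟫ ≤ ‖W n x‖ * ‖x‖ := real_inner_le_norm _ _
      _ ≤ (μ * ‖x‖) * ‖x‖ := by
          gcongr
          exact le_trans ((W n).le_opNorm x) (by gcongr; exact hμ n)
      _ = μ * ‖x‖ ^ 2 := by ring
  have hQconv : ∀ x : H, ∃ L, Tendsto (fun n => ⟪W n x, x⟫) atTop (nhds L) := by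
    intro x
    obtain ⟨Lg, hLg⟩ : ∃ l, Tendsto (fun n => P n * ⟪W n x, x⟫) atTop (nhds l) := by
      refine ⟨_, tendsto_atTop_ciSup (hg x) ⟨C * (μ * ‖x‖ ^ 2), ?_⟩⟩
      rintro _ ⟨n, rfl⟩
      dsimp only
      have h1 : P n * ⟪W n x, x⟫ ≤ P n * (μ * ‖x‖ ^ 2) :=
        mul_le_mul_of_nonneg_left (hQb n x) (le_of_lt (hP0 n))
      have h2 : P n * (μ * ‖x‖ ^ 2) ≤ C * (μ * ‖x‖ ^ 2) := by
        have : 0 ≤ μ * ‖x‖ ^ 2 := by positivity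
        exact mul_le_mul_of_nonneg_right (hPC n) this
      linarith
    have hPl1 : (1:ℝ) ≤ Pl := ge_of_tendsto' hPl hP1
    refine ⟨Lg / Pl, ?_⟩
    have hdiv := hLg.div hPl (by linarith : Pl ≠ 0)
    refine hdiv.congr fun n => ?_
    exact mul_div_cancel_left₀ _ (ne_of_gt (hP0 n))
  -- the key Cauchy estimate
  have hcauchy : ∀ x : H, CauchySeq (fun n => W n x) := by
    intro x
    obtain ⟨Lx, hLx⟩ := hQconv x
    have hQcauchy : CauchySeq (fun n => ⟪W n x, x⟫) := hLx.cauchySeq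
    rw [Metric.cauchySeq_iff] at hQcauchy hPcauchy ⊢
    intro ε hε
    obtain ⟨K, hK0, hKW⟩ : ∃ K : ℝ, 0 < K ∧ (C + 1) * μ ≤ K :=
      ⟨(C + 1) * μ + 1, by positivity, by linarith⟩
    obtain ⟨B, hB0, hBq⟩ : ∃ B : ℝ, 0 < B ∧ ∀ k, ⟪W k x, x⟫ ≤ B :=
      ⟨μ * ‖x‖ ^ 2 + 1, by positivity, fun k => by linarith [hQb k x]⟩
    obtain ⟨δ, hδ0, hδ1, hδ2⟩ : ∃ δ : ℝ, 0 < δ ∧ δ * (K * (1 + B)) ≤ (ε / 2) ^ 2 ∧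
        δ * (μ * ‖x‖ + 1) ≤ ε / 2 := by
      refine ⟨min ((ε / 2) ^ 2 / (K * (1 + B))) (ε / 2 / (μ * ‖x‖ + 1)), ?_, ?_, ?_⟩
      · apply lt_min <;> positivity
      · rw [← le_div_iff₀ (by positivity)]
        exact min_le_left _ _
      · rw [← le_div_iff₀ (by positivity)]
        exact min_le_right _ _
    obtain ⟨N₁, hN₁⟩ := hPcauchy δ hδ0
    obtain ⟨N₂, hN₂⟩ := hQcauchy δ hδ0
    refine ⟨max N₁ N₂, fun m hm n hn => ?_⟩
    suffices key : ∀ m n : ℕ, max N₁ N₂ ≤ m → max N₁ N₂ ≤ n → m ≤ n →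
        dist (W m x) (W n x) < ε by
      rcases le_total m n with h | h
      · exact key m n hm hn h
      · rw [dist_comm]; exact key n m hn hm h
    clear hm hn m n
    intro m n hm hn hmn
    have hNm1 : N₁ ≤ m := le_trans (le_max_left _ _) hm
    have hNn1 : N₁ ≤ n := le_trans (le_max_left _ _) hn
    have hNm2 : N₂ ≤ m := le_trans (le_max_right _ _) hm
    have hNn2 : N₂ ≤ n := le_trans (le_max_right _ _) hn
    have hPd : P n - P m < δ := by
      have h := hN₁ n hNn1 m hNm1
      rw [Real.dist_eq] at h
      exact lt_of_le_of_lt (le_abs_self _) h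
    have hQd : ⟪W n x, x⟫ - ⟪W m x, x⟫ < δ := by
      have h := hN₂ n hNn2 m hNm2
      rw [Real.dist_eq] at h
      exact lt_of_le_of_lt (le_abs_self _) h
    obtain ⟨c, hc1, hcC, hcδ, hform⟩ : ∃ c : ℝ, 1 ≤ c ∧ c ≤ C ∧ c - 1 ≤ δ ∧
        ∀ u : H, ⟪W m u, u⟫ ≤ c * ⟪W n u, u⟫ := by
      refine ⟨P n / P m, (one_le_div (hP0 m)).mpr (hPmono hmn), ?_, ?_, ?_⟩
      · rw [div_le_iff₀ (hP0 m)]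
        nlinarith [hPC n, hP1 m, hC1]
      · have h1 : P n / P m - 1 = (P n - P m) / P m :=
          div_sub_one (ne_of_gt (hP0 m))
        have h2 : (P n - P m) / P m ≤ P n - P m :=
          div_le_self (by linarith [hPmono hmn]) (hP1 m)
        linarith
      · intro u
        rw [div_mul_eq_mul_div, le_div_iff₀ (hP0 m)]
        calc ⟪W m u, u⟫ * P m = P m * ⟪W m u, u⟫ := by ring
          _ ≤ P n * ⟪W n u, u⟫ := hg u hmn
    have hAcl : ∃ A : H →L[ℝ] H, A = c • W n - W m := ⟨_, rfl⟩
    obtain ⟨A, hAdef⟩ := hAcl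
    have hAapp : ∀ u : H, A u = c • (W n u) - W m u := by
      intro u; rw [hAdef]; rfl
    have hAsym : ∀ u v : H, ⟪A u, v⟫ = ⟪u, A v⟫ := by
      intro u v
      simp only [hAapp, inner_sub_left, inner_sub_right, real_inner_smul_left,
        real_inner_smul_right, hsymW n u v, hsymW m u v]
    have hApos : ∀ u : H, 0 ≤ ⟪A u, u⟫ := by
      intro u
      have h2 := hform u
      simp only [hAapp, inner_sub_left, real_inner_smul_left]
      linarith
    have hAnorm : ‖A‖ ≤ K := by
      rw [hAdef]
      calc ‖c • W n - W m‖ ≤ ‖c • W n‖ + ‖W m‖ := norm_sub_le _ _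
        _ ≤ ‖c‖ * ‖W n‖ + ‖W m‖ := add_le_add_left (norm_smul_le c (W n)) ‖W m‖
        _ = c * ‖W n‖ + ‖W m‖ := by
            rw [Real.norm_eq_abs, abs_of_pos (by linarith)]
        _ ≤ C * μ + μ := by
            have h1 := hμ n; have h2 := hμ m
            have h0n : (0:ℝ) ≤ ‖W n‖ := norm_nonneg _
            nlinarith
        _ ≤ K := by nlinarith
    have hAx2 : ⟪A x, x⟫ ≤ δ + δ * B := by
      have h1 : ⟪A x, x⟫ = (⟪W n x, x⟫ - ⟪W m x, x⟫) + (c - 1) * ⟪W n x, x⟫ := by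
        simp only [hAapp, inner_sub_left, real_inner_smul_left]
        ring
      have h3 : (c - 1) * ⟪W n x, x⟫ ≤ δ * B := by
        have hb := hBq n
        have hq := hQnn n x
        nlinarith
      linarith
    have hAxnorm : ‖A x‖ ≤ ε / 2 := by
      have h1 : ‖A x‖ ^ 2 ≤ ‖A‖ * ⟪A x, x⟫ := aux_norm_sq A hAsym hApos x
      have h2 : ‖A‖ * ⟪A x, x⟫ ≤ K * (δ + δ * B) :=
        mul_le_mul hAnorm hAx2 (hApos x) (le_of_lt hK0)
      have h3 : K * (δ + δ * B) ≤ (ε / 2) ^ 2 := by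
        calc K * (δ + δ * B) = δ * (K * (1 + B)) := by ring
          _ ≤ (ε / 2) ^ 2 := hδ1
      have h4 : ‖A x‖ ^ 2 ≤ (ε / 2) ^ 2 := by linarith
      have h5 : (0:ℝ) ≤ ε / 2 := by linarith
      nlinarith [norm_nonneg (A x)]
    have hsplit : W n x - W m x = A x - (c - 1) • W n x := by
      rw [hAapp, sub_smul, one_smul]
      abel
    rw [dist_eq_norm]
    have hfinal : ‖W m x - W n x‖ ≤ ε / 2 + (c - 1) * ‖W n x‖ := by
      rw [← norm_neg, neg_sub, hsplit]
      calc ‖A x - (c - 1) • W n x‖ ≤ ‖A x‖ + ‖(c - 1) • W n x‖ := norm_sub_le _ _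
        _ = ‖A x‖ + |c - 1| * ‖W n x‖ := by rw [norm_smul, Real.norm_eq_abs]
        _ = ‖A x‖ + (c - 1) * ‖W n x‖ := by rw [abs_of_nonneg (by linarith)]
        _ ≤ ε / 2 + (c - 1) * ‖W n x‖ := by linarith
    have hWnx : ‖W n x‖ ≤ μ * ‖x‖ :=
      le_trans ((W n).le_opNorm x) (by gcongr; exact hμ n)
    have h6 : (c - 1) * ‖W n x‖ < ε / 2 := by
      have h7 : (c - 1) * ‖W n x‖ ≤ δ * (μ * ‖x‖) := by
        have := norm_nonneg (W n x)
        nlinarith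
      nlinarith
    linarith
  -- construct the limit operator
  have hex : ∀ x : H, ∃ y : H, Tendsto (fun n => W n x) atTop (nhds y) :=
    fun x => cauchySeq_tendsto_of_complete (hcauchy x)
  choose f hf using hex
  have hfadd : ∀ x y : H, f (x + y) = f x + f y := by
    intro x y
    refine tendsto_nhds_unique ?_ ((hf x).add (hf y))
    exact (hf (x + y)).congr fun n => by simp [map_add]
  have hfsmul : ∀ (r : ℝ) (x : H), f (r • x) = r • f x := by
    intro r x
    refine tendsto_nhds_unique ?_ ((hf x).const_smul r)
    exact (hf (r • x)).congr fun n => by simp [map_smul]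
  have hfbound : ∀ x : H, ‖f x‖ ≤ μ * ‖x‖ := by
    intro x
    refine le_of_tendsto (hf x).norm (Eventually.of_forall fun n => ?_)
    exact le_trans ((W n).le_opNorm x) (by gcongr; exact hμ n)
  set Wlim : H →L[ℝ] H := LinearMap.mkContinuous
    { toFun := f
      map_add' := hfadd
      map_smul' := hfsmul } μ hfbound with hWlimdef
  have hWlimapp : ∀ x : H, Wlim x = f x := fun x => rfl
  refine ⟨Wlim, ?_, ?_, ?_⟩
  · rw [ContinuousLinearMap.isSelfAdjoint_iff_isSymmetric]
    intro u v
    have t1 : Tendsto (fun n => ⟪W n u, v⟫) atTop (nhds ⟪f u, v⟫) :=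
      (hf u).inner tendsto_const_nhds
    have t2 : Tendsto (fun n => ⟪W n u, v⟫) atTop (nhds ⟪u, f v⟫) := by
      refine Tendsto.congr (fun n => (hsymW n u v).symm) ?_
      exact tendsto_const_nhds.inner (hf v)
    have := tendsto_nhds_unique t1 t2
    simpa [hWlimapp] using this
  · intro x
    have t1 : Tendsto (fun n => ⟪W n x, x⟫) atTop (nhds ⟪f x, x⟫) :=
      (hf x).inner tendsto_const_nhds
    rw [hWlimapp]
    exact ge_of_tendsto' t1 fun n => hWα n x
  · intro x
    rw [hWlimapp]
    exact hf x
end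

section
/- Let H be a real Hilbert space, α > 0, let (Wₙ) be a sequence of self-adjoint operators with Wₙ ⪰ α·Id and sup_n ‖Wₙ‖ < ∞, let C ⊆ H be nonempty, and let (xₙ) be a sequence in H such that there is a summable sequence (ηₙ) in [0,∞) and, for each z ∈ C, a summable sequence (εₙ) in [0,∞), with ‖xₙ₊₁ − z‖²_{Wₙ₊₁} ≤ (1+ηₙ)‖xₙ − z‖²_{Wₙ} + εₙ for all n. Then for each z ∈ C the sequence (‖xₙ − z‖_{Wₙ}) converges, and (xₙ) is bounded. -/
open scoped RealInnerProductSpace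
open Filter

lemma aux14 (a η ε : ℕ → ℝ) (ha : ∀ n, 0 ≤ a n) (hη : ∀ n, 0 ≤ η n) (hηs : Summable η)
    (hε : ∀ n, 0 ≤ ε n) (hεs : Summable ε)
    (hrec : ∀ n, a (n+1) ≤ (1 + η n) * a n + ε n) :
    (∃ l, Tendsto a atTop (nhds l)) ∧ ∃ B, ∀ n, a n ≤ B := by
  set P : ℕ → ℝ := fun n => ∏ k ∈ Finset.range n, (1 + η k) with hPdef
  have hP1 : ∀ n, 1 ≤ P n := by
    intro n
    simp only [hPdef]
    calc (1:ℝ) = ∏ _k ∈ Finset.range n, (1:ℝ) := by simp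
      _ ≤ ∏ k ∈ Finset.range n, (1 + η k) :=
          Finset.prod_le_prod (fun k _ => zero_le_one) (fun k _ => by linarith [hη k])
  have hPpos : ∀ n, 0 < P n := fun n => lt_of_lt_of_le one_pos (hP1 n)
  have hPb : ∀ n, P n ≤ Real.exp (∑' k, η k) := by
    intro n
    calc P n ≤ ∏ k ∈ Finset.range n, Real.exp (η k) :=
          Finset.prod_le_prod (fun k _ => by linarith [hη k])
            (fun k _ => by linarith [Real.add_one_le_exp (η k)])
      _ = Real.exp (∑ k ∈ Finset.range n, η k) := (Real.exp_sum _ _).symm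
      _ ≤ Real.exp (∑' k, η k) :=
          Real.exp_le_exp.2 (Summable.sum_le_tsum _ (fun k _ => hη k) hηs)
  have hPmono : Monotone P := by
    apply monotone_nat_of_le_succ
    intro n
    have : P (n+1) = P n * (1 + η n) := Finset.prod_range_succ _ n
    nlinarith [hPpos n, hη n]
  have hPconv : ∃ p : ℝ, Tendsto P atTop (nhds p) :=
    ⟨_, tendsto_atTop_ciSup hPmono ⟨_, fun y ⟨n, hn⟩ => hn ▸ hPb n⟩⟩
  set S : ℕ → ℝ := fun n => ∑ k ∈ Finset.range n, ε k with hSdef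
  have hSb : ∀ n, S n ≤ ∑' k, ε k := fun n => Summable.sum_le_tsum _ (fun k _ => hε k) hεs
  have hSconv : Tendsto S atTop (nhds (∑' k, ε k)) := hεs.hasSum.tendsto_sum_nat
  -- key step inequality
  have hstep : ∀ n, a (n+1) / P (n+1) ≤ a n / P n + ε n := by
    intro n
    have hPs : P (n+1) = P n * (1 + η n) := Finset.prod_range_succ _ n
    rw [div_le_iff₀ (hPpos (n+1))]
    have h1 : (a n / P n) * P (n+1) = (1 + η n) * a n := by
      rw [hPs]; field_simp [(hPpos n).ne']
    have h2 : ε n ≤ ε n * P (n+1) := le_mul_of_one_le_right (hε n) (hP1 _)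
    nlinarith [hrec n]
  set c : ℕ → ℝ := fun n => a n / P n - S n with hcdef
  have hcanti : Antitone c := by
    apply antitone_nat_of_succ_le
    intro n
    have hS : S (n+1) = S n + ε n := Finset.sum_range_succ _ n
    have := hstep n
    simp only [hcdef, hS]
    linarith
  have hclb : ∀ n, -(∑' k, ε k) ≤ c n := by
    intro n
    have : 0 ≤ a n / P n := div_nonneg (ha n) (hPpos n).le
    have := hSb n
    simp only [hcdef]
    linarith
  have hcconv : ∃ L, Tendsto c atTop (nhds L) :=
    ⟨_, tendsto_atTop_ciInf hcanti ⟨_, fun y ⟨n, hn⟩ => hn ▸ hclb n⟩⟩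
  obtain ⟨L, hL⟩ := hcconv
  obtain ⟨p, hp⟩ := hPconv
  have haP : Tendsto (fun n => a n / P n) atTop (nhds (L + ∑' k, ε k)) := by
    have := hL.add hSconv
    refine this.congr (fun n => ?_)
    simp only [hcdef]; ring
  constructor
  · refine ⟨(L + ∑' k, ε k) * p, ?_⟩
    have := haP.mul hp
    refine this.congr (fun n => ?_)
    field_simp [(hPpos n).ne']
  · refine ⟨(a 0 + ∑' k, ε k) * Real.exp (∑' k, η k), fun n => ?_⟩
    have hc0 : c 0 = a 0 := by simp [hcdef, hPdef, hSdef]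
    have h1 : a n / P n ≤ a 0 + ∑' k, ε k := by
      have := hcanti (Nat.zero_le n)
      rw [hc0] at this
      have := hSb n
      simp only [hcdef] at *
      linarith
    have h2 : 0 ≤ a n / P n := div_nonneg (ha n) (hPpos n).le
    have h3 : a n = (a n / P n) * P n := by field_simp [(hPpos n).ne']
    rw [h3]
    exact mul_le_mul h1 (hPb n) (hPpos n).le (add_nonneg (ha 0) (tsum_nonneg hε))

/-- Quasi-Fejér monotonicity with φ(t)=t² relative to variable metrics:
the sequence (‖xₙ − z‖_{Wₙ}) converges for each z ∈ C, and (xₙ) is bounded. -/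
theorem stmt14
    {H : Type*} [NormedAddCommGroup H] [InnerProductSpace ℝ H] [CompleteSpace H]
    (α : ℝ) (hα : 0 < α)
    (W : ℕ → (H →L[ℝ] H)) (hW : ∀ n, IsSelfAdjoint (W n))
    (hWα : ∀ n, ∀ x : H, α * ‖x‖ ^ 2 ≤ ⟪W n x, x⟫)
    (hWb : ∃ μ : ℝ, ∀ n, ‖W n‖ ≤ μ)
    (C : Set H) (hC : C.Nonempty)
    (x : ℕ → H)
    (η : ℕ → ℝ) (hη : ∀ n, 0 ≤ η n) (hηs : Summable η)
    (hFejer : ∀ z ∈ C, ∃ ε : ℕ → ℝ, (∀ n, 0 ≤ ε n) ∧ Summable ε ∧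
      ∀ n, ⟪W (n + 1) (x (n + 1) - z), x (n + 1) - z⟫ ≤
        (1 + η n) * ⟪W n (x n - z), x n - z⟫ + ε n) :
    (∀ z ∈ C, ∃ l : ℝ,
        Tendsto (fun n => Real.sqrt ⟪W n (x n - z), x n - z⟫) atTop (nhds l)) ∧
    (∃ M : ℝ, ∀ n, ‖x n‖ ≤ M) := by
  have key : ∀ z ∈ C, (∃ l, Tendsto (fun n => ⟪W n (x n - z), x n - z⟫) atTop (nhds l)) ∧
      ∃ B, ∀ n, ⟪W n (x n - z), x n - z⟫ ≤ B := by
    intro z hz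
    obtain ⟨ε, hε, hεs, hrec⟩ := hFejer z hz
    exact aux14 (fun n => ⟪W n (x n - z), x n - z⟫) η ε
      (fun n => le_trans (by positivity) (hWα n (x n - z))) hη hηs hε hεs hrec
  constructor
  · intro z hz
    obtain ⟨⟨l, hl⟩, _⟩ := key z hz
    exact ⟨Real.sqrt l, hl.sqrt⟩
  · obtain ⟨z, hz⟩ := hC
    obtain ⟨_, B, hB⟩ := key z hz
    refine ⟨‖z‖ + Real.sqrt (B / α), fun n => ?_⟩
    have h1 : α * ‖x n - z‖ ^ 2 ≤ B := le_trans (hWα n (x n - z)) (hB n)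
    have h2 : ‖x n - z‖ ^ 2 ≤ B / α := by
      rw [le_div_iff₀ hα]; linarith
    have h3 : ‖x n - z‖ ≤ Real.sqrt (B / α) := by
      have := Real.sqrt_le_sqrt h2
      rwa [Real.sqrt_sq (norm_nonneg _)] at this
    calc ‖x n‖ = ‖z + (x n - z)‖ := by rw [show z + (x n - z) = x n by abel]
      _ ≤ ‖z‖ + ‖x n - z‖ := norm_add_le _ _
      _ ≤ ‖z‖ + Real.sqrt (B / α) := by linarith
end

section
/- Let H be a real Hilbert space, let B: H → H be monotone and β-Lipschitz, let μ ≥ α > 0, let U be a bounded self-adjoint operator with μ·Id ⪰ U ⪰ α·Id, and let γ ∈ (0, 1/(βμ)]. Then for all p, p̃ ∈ H, ‖γU(B(p̃) − B(p))‖_{U⁻¹} ≤ ‖p̃ − p‖_{U⁻¹}, where ‖z‖²_{U⁻¹} = ⟨z, U⁻¹z⟩. -/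
open scoped RealInnerProductSpace

lemma cs_selfadj {H : Type*} [NormedAddCommGroup H] [InnerProductSpace ℝ H]
    [CompleteSpace H]
    (U : H →L[ℝ] H) (hU : IsSelfAdjoint U)
    (hpos : ∀ x : H, 0 ≤ ⟪U x, x⟫) (x y : H) :
    ⟪U x, y⟫ ^ 2 ≤ ⟪U x, x⟫ * ⟪U y, y⟫ := by
  have hsym : ∀ a b : H, ⟪U a, b⟫ = ⟪U b, a⟫ := by
    intro a b
    have h := (ContinuousLinearMap.isSelfAdjoint_iff_isSymmetric.mp hU) a b
    simp only [ContinuousLinearMap.coe_coe] at h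
    rw [h, real_inner_comm]
  have h : ∀ t : ℝ, 0 ≤ ⟪U y, y⟫ * (t * t) + (2 * ⟪U x, y⟫) * t + ⟪U x, x⟫ := by
    intro t
    have := hpos (x + t • y)
    have hexp : ⟪U (x + t • y), x + t • y⟫ =
        ⟪U y, y⟫ * (t * t) + (2 * ⟪U x, y⟫) * t + ⟪U x, x⟫ := by
      rw [map_add, map_smul]
      simp [inner_add_add_self, inner_add_left, inner_add_right, inner_smul_left,
        inner_smul_right, real_inner_smul_left, real_inner_smul_right]
      rw [hsym y x]
      ring
    linarith [hexp ▸ this]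
  have hd := discrim_le_zero h
  rw [discrim] at hd
  nlinarith [hd]

/-- If B is monotone β-Lipschitz, μ·Id ⪰ U ⪰ α·Id and γ ≤ 1/(βμ), then
‖γU(B(p̃) − B(p))‖_{U⁻¹} ≤ ‖p̃ − p‖_{U⁻¹}. -/
theorem stmt15
    {H : Type*} [NormedAddCommGroup H] [InnerProductSpace ℝ H] [CompleteSpace H]
    (α μ β γ : ℝ) (hα : 0 < α) (hαμ : α ≤ μ) (hβ : 0 < β)
    (hγ0 : 0 < γ) (hγ : γ ≤ 1 / (β * μ))
    (B : H → H)
    (hBmono : ∀ x y : H, 0 ≤ ⟪B x - B y, x - y⟫)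
    (hBlip : ∀ x y : H, ‖B x - B y‖ ≤ β * ‖x - y‖)
    (U U' : H →L[ℝ] H) (hU : IsSelfAdjoint U)
    (hU' : ∀ x, U (U' x) = x ∧ U' (U x) = x)
    (hUα : ∀ x : H, α * ‖x‖ ^ 2 ≤ ⟪U x, x⟫)
    (hUμ : ∀ x : H, ⟪U x, x⟫ ≤ μ * ‖x‖ ^ 2) :
    ∀ p p' : H,
      Real.sqrt ⟪γ • U (B p' - B p), U' (γ • U (B p' - B p))⟫ ≤
        Real.sqrt ⟪p' - p, U' (p' - p)⟫ := by
  intro p p'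
  have hμ : 0 < μ := lt_of_lt_of_le hα hαμ
  have hpos : ∀ x : H, 0 ≤ ⟪U x, x⟫ := fun x =>
    le_trans (by positivity) (hUα x)
  -- key: ‖U x‖² ≤ μ * ⟪U x, x⟫
  have key : ∀ x : H, ‖U x‖ ^ 2 ≤ μ * ⟪U x, x⟫ := by
    intro x
    have h1 := cs_selfadj U hU hpos x (U x)
    rw [real_inner_self_eq_norm_sq] at h1
    have h2 : ⟪U (U x), U x⟫ ≤ μ * ‖U x‖ ^ 2 := hUμ (U x)
    rcases eq_or_lt_of_le (norm_nonneg (U x)) with h0 | h0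
    · have : ‖U x‖ ^ 2 = 0 := by rw [← h0]; ring
      rw [this]
      exact mul_nonneg hμ.le (hpos x)
    · have h3 : (‖U x‖ ^ 2) ^ 2 ≤ ⟪U x, x⟫ * (μ * ‖U x‖ ^ 2) := by
        calc (‖U x‖ ^ 2) ^ 2 ≤ ⟪U x, x⟫ * ⟪U (U x), U x⟫ := h1
          _ ≤ ⟪U x, x⟫ * (μ * ‖U x‖ ^ 2) := by
              exact mul_le_mul_of_nonneg_left h2 (hpos x)
      have hn : (0:ℝ) < ‖U x‖ ^ 2 := by positivity
      nlinarith [h3]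
  set w := B p' - B p with hw
  set z := p' - p with hz
  -- LHS squared
  have hL : ⟪γ • U w, U' (γ • U w)⟫ = γ ^ 2 * ⟪U w, w⟫ := by
    rw [map_smul, real_inner_smul_left, real_inner_smul_right, (hU' w).2]
    ring
  -- RHS squared lower bound: ⟪z, U' z⟫ ≥ ‖z‖²/μ
  have hR : ‖z‖ ^ 2 / μ ≤ ⟪z, U' z⟫ := by
    have h1 := key (U' z)
    rw [(hU' z).1] at h1
    rw [div_le_iff₀ hμ]
    linarith [h1]
  -- middle bound
  have hlip : ‖w‖ ≤ β * ‖z‖ := hBlip p' p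
  have hmid : γ ^ 2 * ⟪U w, w⟫ ≤ ‖z‖ ^ 2 / μ := by
    have h1 : ⟪U w, w⟫ ≤ μ * ‖w‖ ^ 2 := hUμ w
    have h2 : ‖w‖ ^ 2 ≤ β ^ 2 * ‖z‖ ^ 2 := by
      nlinarith [hlip, norm_nonneg w, norm_nonneg z]
    have h3 : γ * (β * μ) ≤ 1 := by
      rw [le_div_iff₀ (by positivity)] at hγ
      linarith
    have h4 : γ ^ 2 * (β ^ 2 * μ ^ 2) ≤ 1 := by
      nlinarith [h3, mul_pos hγ0 (mul_pos hβ hμ)]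
    rw [le_div_iff₀ hμ]
    have e1 : γ ^ 2 * ⟪U w, w⟫ ≤ γ ^ 2 * (μ * ‖w‖ ^ 2) :=
      mul_le_mul_of_nonneg_left h1 (sq_nonneg γ)
    have e2 : γ ^ 2 * (μ * ‖w‖ ^ 2) ≤ γ ^ 2 * (μ * (β ^ 2 * ‖z‖ ^ 2)) :=
      mul_le_mul_of_nonneg_left (mul_le_mul_of_nonneg_left h2 hμ.le) (sq_nonneg γ)
    have e3 : γ ^ 2 * ⟪U w, w⟫ * μ ≤ γ ^ 2 * (μ * (β ^ 2 * ‖z‖ ^ 2)) * μ :=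
      mul_le_mul_of_nonneg_right (e1.trans e2) hμ.le
    nlinarith [e3, h4, sq_nonneg ‖z‖]
  exact Real.sqrt_le_sqrt (by rw [hL]; linarith)
end
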